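/- Let X be a compact metric space and f : X → X a continuous map. If A is an attractor, then its dual repeller A* = {x ∈ X : ω(x) ∩ A = ∅} is a repeller, and the dual attractor of A* equals A, i.e. {x ∈ X : there exists a backward orbit γ through x with α_o(γ) ∩ A* = ∅} = A. Conversely, if R is a repeller, then its dual attractor R* = {x ∈ X : there exists a backward orbit γ through x with α_o(γ) ∩ R = ∅} is an attractor, and the dual repeller of R* equals R, i.e. {x ∈ X : ω(x) ∩ R* = ∅} = R. -/

import Mathlib

open Set

/-- The maximal invariant set in `U`: the union of all subsets `S ⊆ U` with `f '' S = S`. -/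
def MaxInv {Y : Type*} (f : Y → Y) (U : Set Y) : Set Y :=
  ⋃₀ {S : Set Y | S ⊆ U ∧ f '' S = S}

/-- The maximal forward invariant set in `U`: the union of all subsets `S ⊆ U`
with `f '' S ⊆ S`. -/
def MaxInvPlus {Y : Type*} (f : Y → Y) (U : Set Y) : Set Y :=
  ⋃₀ {S : Set Y | S ⊆ U ∧ f '' S ⊆ S}

/-- The omega-limit set `ω(U) = ⋂_{n ≥ 0} cl (⋃_{m ≥ n} f^[m] '' U)`. -/
def OmegaLim {Y : Type*} [TopologicalSpace Y] (f : Y → Y) (U : Set Y) : Set Y :=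
  ⋂ n : ℕ, closure (⋃ m ≥ n, f^[m] '' U)

/-- The alpha-limit set `α(U) = ⋂_{n ≥ 0} cl (⋃_{m ≥ n} (f^[m]) ⁻¹' U)`. -/
def AlphaLim {Y : Type*} [TopologicalSpace Y] (f : Y → Y) (U : Set Y) : Set Y :=
  ⋂ n : ℕ, closure (⋃ m ≥ n, f^[m] ⁻¹' U)

/-- A trapping region: a forward invariant set `U` with `f^[n] '' cl U ⊆ int U`
for some `n ≥ 1`. -/
def IsTrappingRegion {Y : Type*} [TopologicalSpace Y] (f : Y → Y) (U : Set Y) : Prop :=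
  f '' U ⊆ U ∧ ∃ n : ℕ, 1 ≤ n ∧ f^[n] '' closure U ⊆ interior U

/-- An attractor: `A = Inv(U)` for some trapping region `U`. -/
def IsAttractor {Y : Type*} [TopologicalSpace Y] (f : Y → Y) (A : Set Y) : Prop :=
  ∃ U : Set Y, IsTrappingRegion f U ∧ A = MaxInv f U

/-- An attracting neighborhood: `ω(U) ⊆ int U`. -/
def IsAttractingNbhd {Y : Type*} [TopologicalSpace Y] (f : Y → Y) (U : Set Y) : Prop :=
  OmegaLim f U ⊆ interior U

/-- A repelling region: a backward invariant set `U` with `(f^[n]) ⁻¹' cl U ⊆ int U`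
for some `n ≥ 1`. -/
def IsRepellingRegion {Y : Type*} [TopologicalSpace Y] (f : Y → Y) (U : Set Y) : Prop :=
  f ⁻¹' U ⊆ U ∧ ∃ n : ℕ, 1 ≤ n ∧ f^[n] ⁻¹' closure U ⊆ interior U

/-- A repeller: `R = Inv⁺(U)` for some repelling region `U`. -/
def IsRepeller {Y : Type*} [TopologicalSpace Y] (f : Y → Y) (R : Set Y) : Prop :=
  ∃ U : Set Y, IsRepellingRegion f U ∧ R = MaxInvPlus f U

/-- A repelling neighborhood: `α(U) ⊆ int U`. -/
def IsRepellingNbhd {Y : Type*} [TopologicalSpace Y] (f : Y → Y) (U : Set Y) : Prop :=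
  AlphaLim f U ⊆ interior U

/-- A backward orbit: a sequence `γ : ℕ → Y` with `f (γ (k+1)) = γ k` for all `k`.
A backward orbit through `x` additionally satisfies `γ 0 = x`. -/
def IsBackwardOrbit {Y : Type*} (f : Y → Y) (γ : ℕ → Y) : Prop :=
  ∀ k : ℕ, f (γ (k + 1)) = γ k

/-- The orbital alpha-limit set `α_o(γ) = ⋂_{n ≥ 0} cl {γ m : m ≥ n}`. -/
def OrbAlpha {Y : Type*} [TopologicalSpace Y] (γ : ℕ → Y) : Set Y :=
  ⋂ n : ℕ, closure (γ '' {m : ℕ | n ≤ m})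

/-- The dual repeller of an attractor `A`: `A* = {x : ω(x) ∩ A = ∅}`. -/
def DualRepeller {Y : Type*} [TopologicalSpace Y] (f : Y → Y) (A : Set Y) : Set Y :=
  {x : Y | OmegaLim f {x} ∩ A = ∅}

/-- The dual attractor of a repeller `R`:
`R* = {x : ∃ backward orbit γ through x with α_o(γ) ∩ R = ∅}`. -/
def DualAttractor {Y : Type*} [TopologicalSpace Y] (f : Y → Y) (R : Set Y) : Set Y :=
  {x : Y | ∃ γ : ℕ → Y, γ 0 = x ∧ IsBackwardOrbit f γ ∧ OrbAlpha γ ∩ R = ∅}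
section Aux
set_option linter.unusedSectionVars false
set_option linter.unusedVariables false

variable {X : Type*} [MetricSpace X] [CompactSpace X] {f : X → X} {U V S : Set X}

/-- closure of tail of a sequence -/
private def tailCl (u : ℕ → X) (n : ℕ) : Set X := closure (u '' {m : ℕ | n ≤ m})

private def limSet (u : ℕ → X) : Set X := ⋂ n : ℕ, tailCl u n

private lemma tailCl_anti (u : ℕ → X) {n n' : ℕ} (h : n ≤ n') : tailCl u n' ⊆ tailCl u n :=
  closure_mono (image_mono fun m hm => le_trans h hm)

private lemma limSet_subset (u : ℕ → X) (n : ℕ) : limSet u ⊆ tailCl u n := iInter_subset _ n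

private lemma limSet_nonempty (u : ℕ → X) : (limSet u).Nonempty := by
  apply IsCompact.nonempty_iInter_of_sequence_nonempty_isCompact_isClosed
  · exact fun i => tailCl_anti u (Nat.le_succ i)
  · exact fun i => ⟨u i, subset_closure ⟨i, le_refl i, rfl⟩⟩
  · exact isClosed_closure.isCompact
  · exact fun i => isClosed_closure

private lemma image_limSet_subset_of_backward (hf : Continuous f) {u : ℕ → X}
    (h : ∀ m, f (u (m + 1)) = u m) : f '' limSet u ⊆ limSet u := by
  apply subset_iInter; intro n
  calc f '' limSet u ⊆ f '' tailCl u (n+1) := image_mono (limSet_subset u (n+1))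
    _ ⊆ closure (f '' (u '' {m : ℕ | n+1 ≤ m})) := image_closure_subset_closure_image hf
    _ ⊆ tailCl u n := by
        apply closure_mono
        rintro y ⟨z, ⟨m, hm, rfl⟩, rfl⟩
        simp only [mem_setOf_eq] at hm
        obtain ⟨m', rfl⟩ : ∃ m', m = m' + 1 := ⟨m - 1, by omega⟩
        exact ⟨m', by simp only [mem_setOf_eq]; omega, (h m').symm⟩

private lemma image_limSet_subset_of_forward (hf : Continuous f) {u : ℕ → X}
    (h : ∀ m, f (u m) = u (m + 1)) : f '' limSet u ⊆ limSet u := by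
  apply subset_iInter; intro n
  calc f '' limSet u ⊆ f '' tailCl u n := image_mono (limSet_subset u n)
    _ ⊆ closure (f '' (u '' {m : ℕ | n ≤ m})) := image_closure_subset_closure_image hf
    _ ⊆ tailCl u n := by
        apply closure_mono
        rintro y ⟨z, ⟨m, hm, rfl⟩, rfl⟩
        exact ⟨m + 1, le_trans hm (Nat.le_succ m), (h m).symm ▸ rfl⟩

private lemma limSet_subset_image_of_forward (hf : Continuous f) {u : ℕ → X}
    (h : ∀ m, f (u m) = u (m + 1)) : limSet u ⊆ f '' limSet u := by
  intro y hy
  set L : ℕ → Set X := fun n => tailCl u n ∩ f ⁻¹' {y} with hL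
  have hcl : ∀ n, IsClosed (L n) := fun n =>
    isClosed_closure.inter (isClosed_singleton.preimage hf)
  have hne : ∀ n, (L n).Nonempty := by
    intro n
    have himg : IsClosed (f '' tailCl u n) :=
      (isClosed_closure.isCompact.image hf).isClosed
    have hsub : tailCl u (n+1) ⊆ f '' tailCl u n := by
      apply closure_minimal ?_ himg
      rintro z ⟨m, hm, rfl⟩
      simp only [mem_setOf_eq] at hm
      obtain ⟨m', rfl⟩ : ∃ m', m = m' + 1 := ⟨m - 1, by omega⟩
      exact ⟨u m', subset_closure ⟨m', by simp only [mem_setOf_eq]; omega, rfl⟩, h m'⟩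
    obtain ⟨z, hz1, hz2⟩ := hsub (limSet_subset u (n+1) hy)
    exact ⟨z, hz1, hz2⟩
  have key : (⋂ n, L n).Nonempty := by
    apply IsCompact.nonempty_iInter_of_sequence_nonempty_isCompact_isClosed L
      (fun i => inter_subset_inter_left _ (tailCl_anti u (Nat.le_succ i))) hne
      (hcl 0).isCompact hcl
  obtain ⟨z, hz⟩ := key
  have hz1 : z ∈ limSet u := by
    apply mem_iInter.mpr; intro n; exact (mem_iInter.mp hz n).1
  have hz2 : f z = y := (mem_iInter.mp hz 0).2
  exact ⟨z, hz1, hz2⟩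

private lemma omegaLim_singleton (f : X → X) (x : X) :
    OmegaLim f {x} = limSet (fun m => f^[m] x) := by
  unfold OmegaLim limSet tailCl
  apply iInter_congr; intro n
  refine congrArg closure ?_
  ext y
  simp only [mem_iUnion, image_singleton, mem_singleton_iff, mem_image, mem_setOf_eq]
  constructor
  · rintro ⟨m, hm, rfl⟩; exact ⟨m, hm, rfl⟩
  · rintro ⟨m, hm, rfl⟩; exact ⟨m, hm, rfl⟩

/- MaxInv / MaxInvPlus basics -/

private lemma maxInv_subset : MaxInv f U ⊆ U := sUnion_subset fun _ hS => hS.1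

private lemma subset_maxInv (h1 : S ⊆ U) (h2 : f '' S = S) : S ⊆ MaxInv f U :=
  subset_sUnion_of_mem ⟨h1, h2⟩

private lemma image_maxInv : f '' MaxInv f U = MaxInv f U := by
  apply Subset.antisymm
  · rintro y ⟨z, hz, rfl⟩
    obtain ⟨S, hS, hzS⟩ := hz
    exact ⟨S, hS, hS.2 ▸ ⟨z, hzS, rfl⟩⟩
  · rintro y ⟨S, hS, hyS⟩
    obtain ⟨z, hzS, rfl⟩ := hS.2 ▸ hyS
    exact ⟨z, ⟨S, hS, hzS⟩, rfl⟩

private lemma image_iterate_of_image_eq (h : f '' S = S) (n : ℕ) : f^[n] '' S = S := by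
  induction n with
  | zero => simp
  | succ n ih => rw [Function.iterate_succ', image_comp, ih, h]

private lemma maxInvPlus_subset : MaxInvPlus f V ⊆ V := sUnion_subset fun _ hS => hS.1

private lemma subset_maxInvPlus (h1 : S ⊆ V) (h2 : f '' S ⊆ S) : S ⊆ MaxInvPlus f V :=
  subset_sUnion_of_mem ⟨h1, h2⟩

private lemma mem_maxInvPlus {x : X} : x ∈ MaxInvPlus f V ↔ ∀ k : ℕ, f^[k] x ∈ V := by
  constructor
  · rintro ⟨S, ⟨hSV, hSf⟩, hx⟩ k
    have : ∀ k : ℕ, f^[k] x ∈ S := by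
      intro k; induction k with
      | zero => simpa using hx
      | succ k ih =>
        rw [Function.iterate_succ_apply']
        exact hSf ⟨f^[k] x, ih, rfl⟩
    exact hSV (this k)
  · intro hx
    refine subset_maxInvPlus (V := V) (S := {y : X | ∀ k : ℕ, f^[k] y ∈ V}) ?_ ?_ hx
    · intro y hy; simpa using hy 0
    · rintro y ⟨z, hz, rfl⟩ k
      rw [← Function.iterate_succ_apply]
      exact hz (k + 1)

private lemma mem_iterate_of_image_subset (h : f '' S ⊆ S) {x : X} (hx : x ∈ S) (n : ℕ) :
    f^[n] x ∈ S := by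
  induction n with
  | zero => simpa using hx
  | succ n ih => rw [Function.iterate_succ_apply']; exact h ⟨f^[n] x, ih, rfl⟩

/- trapping / repelling complements -/

private lemma trapping_compl (h : IsTrappingRegion f U) : IsRepellingRegion f Uᶜ := by
  obtain ⟨h1, n, hn1, hn⟩ := h
  refine ⟨?_, n, hn1, ?_⟩
  · intro x hx hxU
    exact hx (h1 ⟨x, hxU, rfl⟩)
  · rw [closure_compl, interior_compl]
    intro x hx hxcl
    exact hx (hn ⟨x, hxcl, rfl⟩)

private lemma repelling_compl (h : IsRepellingRegion f V) : IsTrappingRegion f Vᶜ := by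
  obtain ⟨h1, n, hn1, hn⟩ := h
  refine ⟨?_, n, hn1, ?_⟩
  · rintro y ⟨x, hxV, rfl⟩ hfx
    exact hxV (h1 hfx)
  · rw [closure_compl, interior_compl]
    rintro y ⟨x, hxint, rfl⟩ hycl
    exact hxint (hn hycl)

private lemma maxInv_subset_interior (hU : IsTrappingRegion f U) :
    MaxInv f U ⊆ interior U := by
  obtain ⟨_, n, _, hn⟩ := hU
  calc MaxInv f U = f^[n] '' MaxInv f U := (image_iterate_of_image_eq image_maxInv n).symm
    _ ⊆ f^[n] '' closure U := image_mono (maxInv_subset.trans subset_closure)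
    _ ⊆ interior U := hn

private lemma maxInvPlus_subset_interior (hV : IsRepellingRegion f V) :
    MaxInvPlus f V ⊆ interior V := by
  obtain ⟨_, n, _, hn⟩ := hV
  intro x hx
  apply hn
  have : f^[n] x ∈ V := mem_maxInvPlus.mp hx n
  exact subset_closure this

end Aux

section Main
set_option linter.unusedSectionVars false
variable {X : Type*} [MetricSpace X] [CompactSpace X] {f : X → X} {U V : Set X}

private lemma orbAlpha_eq (γ : ℕ → X) : OrbAlpha γ = limSet γ := rfl

private lemma dualRepeller_eq (hf : Continuous f) (hU : IsTrappingRegion f U) :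
    DualRepeller f (MaxInv f U) = MaxInvPlus f Uᶜ := by
  ext x
  simp only [DualRepeller, mem_setOf_eq]
  rw [mem_maxInvPlus]
  constructor
  · intro hx
    by_contra hcon
    push_neg at hcon
    obtain ⟨k, hk⟩ := hcon
    have hkU : f^[k] x ∈ U := not_not.mp hk
    set u : ℕ → X := fun m => f^[m] x with hu
    have hfu : ∀ m, f (u m) = u (m + 1) := fun m => (Function.iterate_succ_apply' f m x).symm
    have hωne : (limSet u).Nonempty := limSet_nonempty u
    have hωinv : f '' limSet u = limSet u :=
      Subset.antisymm (image_limSet_subset_of_forward hf hfu)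
        (limSet_subset_image_of_forward hf hfu)
    have htail : ∀ j, u (k + j) ∈ U := by
      intro j; induction j with
      | zero => simpa using hkU
      | succ j ih =>
        show u (k + j + 1) ∈ U
        rw [← hfu (k + j)]
        exact hU.1 ⟨u (k + j), ih, rfl⟩
    have hωclU : limSet u ⊆ closure U := by
      refine (limSet_subset u k).trans (closure_mono ?_)
      rintro y ⟨m, hm, rfl⟩
      simp only [mem_setOf_eq] at hm
      obtain ⟨j, rfl⟩ := Nat.exists_eq_add_of_le hm
      exact htail j
    obtain ⟨hU1, n, hn1, hn⟩ := hU
    have hωU : limSet u ⊆ U := by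
      intro y hy
      have h2 : y ∈ f^[n] '' limSet u := by
        rw [image_iterate_of_image_eq hωinv n]; exact hy
      obtain ⟨z, hz, rfl⟩ := h2
      exact interior_subset (hn ⟨z, hωclU hz, rfl⟩)
    obtain ⟨y, hy⟩ := hωne
    have hmem : y ∈ OmegaLim f {x} ∩ MaxInv f U :=
      ⟨(omegaLim_singleton f x).symm ▸ hy, subset_maxInv hωU hωinv hy⟩
    rw [hx] at hmem; exact hmem
  · intro hx
    apply eq_empty_iff_forall_notMem.mpr
    rintro y ⟨hy1, hy2⟩
    have h1 : y ∈ closure Uᶜ := by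
      rw [omegaLim_singleton f x] at hy1
      refine (limSet_subset _ 0).trans (closure_mono ?_) hy1
      rintro z ⟨m, _, rfl⟩
      exact hx m
    rw [closure_compl] at h1
    exact h1 (maxInv_subset_interior ⟨hU.1, hU.2⟩ hy2)

private lemma dualAttractor_eq (hf : Continuous f) (hV : IsRepellingRegion f V) :
    DualAttractor f (MaxInvPlus f V) = MaxInv f Vᶜ := by
  ext x
  simp only [DualAttractor, mem_setOf_eq]
  constructor
  · rintro ⟨γ, hγ0, hγb, hdisj⟩
    have hγV : ∀ k, γ k ∈ Vᶜ := by
      by_contra hcon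
      push_neg at hcon
      obtain ⟨k, hk⟩ := hcon
      have hkV : γ k ∈ V := not_not.mp hk
      have htail : ∀ j, γ (k + j) ∈ V := by
        intro j; induction j with
        | zero => simpa using hkV
        | succ j ih =>
          show γ (k + j + 1) ∈ V
          exact hV.1 (by rw [mem_preimage, hγb (k + j)]; exact ih)
      have hαne := limSet_nonempty γ
      have hαinv : f '' limSet γ ⊆ limSet γ := image_limSet_subset_of_backward hf hγb
      have hαcl : limSet γ ⊆ closure V := by
        refine (limSet_subset γ k).trans (closure_mono ?_)
        rintro y ⟨m, hm, rfl⟩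
        simp only [mem_setOf_eq] at hm
        obtain ⟨j, rfl⟩ := Nat.exists_eq_add_of_le hm
        exact htail j
      obtain ⟨hV1, n, hn1, hn⟩ := hV
      have hαV : limSet γ ⊆ V := by
        intro y hy
        have h1 : f^[n] y ∈ limSet γ := mem_iterate_of_image_subset hαinv hy n
        exact interior_subset (hn (hαcl h1))
      obtain ⟨y, hy⟩ := hαne
      have hmem : y ∈ OrbAlpha γ ∩ MaxInvPlus f V :=
        ⟨(orbAlpha_eq γ).symm ▸ hy, subset_maxInvPlus hαV hαinv hy⟩
      rw [hdisj] at hmem; exact hmem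
    have hVc : f '' Vᶜ ⊆ Vᶜ := (repelling_compl hV).1
    have hfwd : ∀ m, f^[m] x ∈ Vᶜ :=
      mem_iterate_of_image_subset hVc (hγ0 ▸ hγV 0)
    set S : Set X := range γ ∪ range (fun m => f^[m] x) with hS
    have hxS : x ∈ S := Or.inl ⟨0, hγ0⟩
    have hSV : S ⊆ Vᶜ := by rintro y (⟨k, rfl⟩ | ⟨m, rfl⟩); exacts [hγV k, hfwd m]
    have hSinv : f '' S = S := by
      apply Subset.antisymm
      · rintro y ⟨z, (⟨k, rfl⟩ | ⟨m, rfl⟩), rfl⟩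
        · cases k with
          | zero => exact Or.inr ⟨1, by simp [hγ0]⟩
          | succ k => exact Or.inl ⟨k, (hγb k).symm⟩
        · exact Or.inr ⟨m + 1, by simp [Function.iterate_succ_apply']⟩
      · rintro y (⟨k, rfl⟩ | ⟨m, rfl⟩)
        · exact ⟨γ (k + 1), Or.inl ⟨k + 1, rfl⟩, hγb k⟩
        · cases m with
          | zero => exact ⟨γ 1, Or.inl ⟨1, rfl⟩, by rw [hγb 0, hγ0]; rfl⟩
          | succ m => exact ⟨f^[m] x, Or.inr ⟨m, rfl⟩, (Function.iterate_succ_apply' f m x).symm⟩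
    exact subset_maxInv hSV hSinv hxS
  · intro hx
    have hMinv : f '' MaxInv f Vᶜ = MaxInv f Vᶜ := image_maxInv
    have hpre : ∀ y : MaxInv f Vᶜ, ∃ z : MaxInv f Vᶜ, f z = y := by
      intro y
      have hy2 : (y : X) ∈ f '' MaxInv f Vᶜ := hMinv.symm ▸ y.2
      obtain ⟨z, hz, hfz⟩ := hy2
      exact ⟨⟨z, hz⟩, hfz⟩
    choose g hg using hpre
    refine ⟨fun k => ((g^[k] ⟨x, hx⟩ : MaxInv f Vᶜ) : X), rfl, ?_, ?_⟩
    · intro k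
      show f ((g^[k + 1] ⟨x, hx⟩ : MaxInv f Vᶜ) : X) = ((g^[k] ⟨x, hx⟩ : MaxInv f Vᶜ) : X)
      rw [Function.iterate_succ_apply']
      exact hg (g^[k] ⟨x, hx⟩)
    · apply eq_empty_iff_forall_notMem.mpr
      rintro y ⟨hy1, hy2⟩
      rw [orbAlpha_eq] at hy1
      have h1 : y ∈ closure Vᶜ := by
        refine (limSet_subset _ 0).trans (closure_mono ?_) hy1
        rintro z ⟨m, _, rfl⟩
        exact maxInv_subset (g^[m] ⟨x, hx⟩).2
      rw [closure_compl] at h1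
      exact h1 (maxInvPlus_subset_interior hV hy2)

end Main

/-- Duality between attractors and repellers: `(A*)* = A` and
`(R*)* = R`. -/
theorem attractor_repeller_duality
    {X : Type*} [MetricSpace X] [CompactSpace X]
    (f : X → X) (hf : Continuous f) :
    (∀ A : Set X, IsAttractor f A →
      IsRepeller f (DualRepeller f A) ∧ DualAttractor f (DualRepeller f A) = A) ∧
    (∀ R : Set X, IsRepeller f R →
      IsAttractor f (DualAttractor f R) ∧ DualRepeller f (DualAttractor f R) = R) := by
  constructor
  · rintro A ⟨U, hU, rfl⟩
    refine ⟨⟨Uᶜ, trapping_compl hU, dualRepeller_eq hf hU⟩, ?_⟩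
    rw [dualRepeller_eq hf hU, dualAttractor_eq hf (trapping_compl hU), compl_compl]
  · rintro R ⟨V, hV, rfl⟩
    refine ⟨⟨Vᶜ, repelling_compl hV, dualAttractor_eq hf hV⟩, ?_⟩
    rw [dualAttractor_eq hf hV, dualRepeller_eq hf (repelling_compl hV), compl_compl]
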